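/- Let R₀ ⊆ k[P,P⁻¹,Q,Q⁻¹,T,T⁻¹,Z] be the free 𝒪_k-submodule spanned by ϖᵈPᵖQ^qTᵃZᵉ with d = max{p+q+a, p+q-a, p+a, q-a}, e ≥ 0, p,q ≥ 0 if e = 0, and (p ≥ 0 or q ≥ 0) if e = 1. Let A₀ = R₀[P,Q]. Then for all n ≥ 0, ϖ⁻ⁿZ ∈ A₀[T] and ϖ⁻ⁿZ ∈ A₀[T⁻¹], but ϖ⁻¹Z ∉ A₀. -/

import Mathlib

/-- The valuation ring `𝒪_k = {c : k | ‖c‖ ≤ 1}` of a non-archimedean normed field. -/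
def valuationSubring (k : Type*) [NormedField k] [IsUltrametricDist k] : Subring k where
  carrier := {c | ‖c‖ ≤ 1}
  one_mem' := by simp
  zero_mem' := by simp
  neg_mem' := by simp
  mul_mem' := by
    intro a b ha hb
    simp only [Set.mem_setOf_eq] at *
    calc ‖a * b‖ = ‖a‖ * ‖b‖ := norm_mul a b
      _ ≤ 1 * 1 := mul_le_mul ha hb (norm_nonneg b) zero_le_one
      _ = 1 := one_mul 1
  add_mem' := by
    intro a b ha hb
    simp only [Set.mem_setOf_eq] at *
    exact le_trans (IsUltrametricDist.norm_add_le_max a b) (max_le ha hb)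


/-- Coefficient bound function for the non-sheafy example. -/
noncomputable def nsBnd (w : ℝ) (m : ℤ × ℤ × ℤ × ℕ) : ℝ :=
  if m.2.2.2 = 0 then (if 0 ≤ m.1 ∧ 0 ≤ m.2.1 then w ^ |m.2.2.1| else 0)
  else if m.2.2.2 = 1 then
    (if 0 ≤ m.1 ∧ 0 ≤ m.2.1 then w ^ (-|m.2.2.1|)
     else if 0 ≤ m.1 then w ^ m.2.2.1
     else if 0 ≤ m.2.1 then w ^ (-m.2.2.1) else 0)
  else 1

lemma nsBnd_nonneg {w : ℝ} (hw : 0 ≤ w) (m : ℤ × ℤ × ℤ × ℕ) : 0 ≤ nsBnd w m := by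
  unfold nsBnd
  split_ifs <;> first | positivity | norm_num

set_option maxHeartbeats 2000000 in
lemma nsBnd_mul {w : ℝ} (hw0 : 0 < w) (hw1 : w ≤ 1) (m₁ m₂ : ℤ × ℤ × ℤ × ℕ)
    (he : m₁.2.2.2 + m₂.2.2.2 ≤ 1) :
    nsBnd w m₁ * nsBnd w m₂ ≤ nsBnd w (m₁ + m₂) := by
  obtain ⟨p₁, q₁, a₁, e₁⟩ := m₁
  obtain ⟨p₂, q₂, a₂, e₂⟩ := m₂
  simp only at he
  have hsum : (p₁, q₁, a₁, e₁) + (p₂, q₂, a₂, e₂) = (p₁ + p₂, q₁ + q₂, a₁ + a₂, e₁ + e₂) := rfl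
  rw [hsum]
  have t1 : |a₁ + a₂| ≤ |a₁| + |a₂| := abs_add_le a₁ a₂
  have t2 : |a₁| ≤ |a₂| + |a₁ + a₂| := by
    calc |a₁| = |(a₁ + a₂) + (-a₂)| := by ring_nf
    _ ≤ |a₁ + a₂| + |(-a₂)| := abs_add_le _ _
    _ = |a₂| + |a₁ + a₂| := by rw [abs_neg]; ring
  have t3 : |a₂| ≤ |a₁| + |a₁ + a₂| := by
    calc |a₂| = |(a₁ + a₂) + (-a₁)| := by ring_nf
    _ ≤ |a₁ + a₂| + |(-a₁)| := abs_add_le _ _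
    _ = |a₁| + |a₁ + a₂| := by rw [abs_neg]; ring
  have u1 : a₁ ≤ |a₁| := le_abs_self _
  have u2 : -a₁ ≤ |a₁| := neg_le_abs _
  have u3 : a₂ ≤ |a₂| := le_abs_self _
  have u4 : -a₂ ≤ |a₂| := neg_le_abs _
  have u5 : a₁ + a₂ ≤ |a₁ + a₂| := le_abs_self _
  have u6 : -(a₁ + a₂) ≤ |a₁ + a₂| := neg_le_abs _
  have key : ∀ x y : ℤ, y ≤ x → w ^ x ≤ w ^ y := fun x y h =>
    zpow_le_zpow_right_of_le_one₀ hw0 hw1 h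
  have hne : w ≠ 0 := hw0.ne'
  unfold nsBnd
  simp only
  split_ifs <;>
    first
      | omega
      | (simp only [zero_mul, mul_zero]; positivity)
      | (rw [← zpow_add₀ hne]; apply key; omega)
      | (rw [← zpow_add₀ hne]; apply key; linarith)

/-- The subring of coefficient-bounded elements. -/
noncomputable def nsS (k : Type*) [NormedField k] [IsUltrametricDist k]
    {w : ℝ} (hw0 : 0 < w) (hw1 : w ≤ 1) : Subring (AddMonoidAlgebra k (ℤ × ℤ × ℤ × ℕ)) where
  carrier := {x | ∀ m : ℤ × ℤ × ℤ × ℕ, m.2.2.2 ≤ 1 → ‖x.coeff m‖ ≤ nsBnd w m}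
  zero_mem' := by
    intro m _
    simpa using nsBnd_nonneg hw0.le m
  one_mem' := by
    intro m _
    rw [AddMonoidAlgebra.one_def]
    classical
    rw [AddMonoidAlgebra.coeff_single, Finsupp.single_apply]
    split_ifs with h
    · subst h
      simp [nsBnd]
    · simpa using nsBnd_nonneg hw0.le m
  neg_mem' := by
    intro x hx m hm
    rw [AddMonoidAlgebra.coeff_neg, Finsupp.neg_apply, norm_neg]
    exact hx m hm
  add_mem' := by
    intro x y hx hy m hm
    rw [AddMonoidAlgebra.coeff_add, Finsupp.add_apply]
    exact le_trans (IsUltrametricDist.norm_add_le_max _ _)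
      (max_le (hx m hm) (hy m hm))
  mul_mem' := by
    intro x y hx hy m hm
    classical
    rw [AddMonoidAlgebra.mul_apply, Finsupp.sum]
    apply IsUltrametricDist.norm_sum_le_of_forall_le_of_nonneg (nsBnd_nonneg hw0.le m)
    intro a₁ _
    rw [Finsupp.sum]
    apply IsUltrametricDist.norm_sum_le_of_forall_le_of_nonneg (nsBnd_nonneg hw0.le m)
    intro a₂ _
    split_ifs with hadd
    · subst hadd
      have hee : a₁.2.2.2 + a₂.2.2.2 ≤ 1 := hm
      calc ‖x.coeff a₁ * y.coeff a₂‖ = ‖x.coeff a₁‖ * ‖y.coeff a₂‖ := norm_mul _ _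
        _ ≤ nsBnd w a₁ * nsBnd w a₂ :=
            mul_le_mul (hx a₁ (by omega)) (hy a₂ (by omega)) (norm_nonneg _)
              (nsBnd_nonneg hw0.le _)
        _ ≤ nsBnd w (a₁ + a₂) := nsBnd_mul hw0 hw1 _ _ hee
    · simpa using nsBnd_nonneg hw0.le m

lemma ns_mem_nsS_of_gen {k : Type*} [NormedField k] [IsUltrametricDist k]
    {ϖ : k} (hϖ0 : 0 < ‖ϖ‖) (hϖ1 : ‖ϖ‖ ≤ 1) (p q a : ℤ) (e : ℕ)
    (h0 : e = 0 → 0 ≤ p ∧ 0 ≤ q) (h1 : e = 1 → 0 ≤ p ∨ 0 ≤ q) :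
    (ϖ ^ (max (max (p + q + a) (p + q - a)) (max (p + a) (q - a))) •
      AddMonoidAlgebra.single (p, q, a, e) (1 : k)) ∈ nsS k hϖ0 hϖ1 := by
  intro m hm
  classical
  rw [AddMonoidAlgebra.coeff_smul, Finsupp.smul_apply, AddMonoidAlgebra.coeff_single, Finsupp.single_apply]
  split_ifs with hj
  · subst hj
    rw [smul_eq_mul, mul_one, norm_zpow]
    have hmono : ∀ x y : ℤ, y ≤ x → ‖ϖ‖ ^ x ≤ ‖ϖ‖ ^ y := fun x y h =>
      zpow_le_zpow_right_of_le_one₀ hϖ0 hϖ1 h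
    have he : e = 0 ∨ e = 1 := by
      have := hm; dsimp only at this; omega
    unfold nsBnd
    dsimp only
    obtain he | he := he
    · subst he
      obtain ⟨hp, hq⟩ := h0 rfl
      rw [if_pos rfl, if_pos ⟨hp, hq⟩]
      apply hmono
      obtain hA | hA := abs_choice a <;> rw [hA] <;>
        simp only [max_def] <;> split_ifs <;> omega
    · subst he
      rw [if_neg (by norm_num), if_pos rfl]
      rcases h1 rfl with hp | hq
      · by_cases hq : 0 ≤ q
        · rw [if_pos ⟨hp, hq⟩]
          apply hmono
          obtain hA | hA := abs_choice a <;> rw [hA] <;>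
            simp only [max_def] <;> split_ifs <;> omega
        · rw [if_neg (by tauto), if_pos hp]
          apply hmono
          simp only [max_def]; split_ifs <;> omega
      · by_cases hp : 0 ≤ p
        · rw [if_pos ⟨hp, hq⟩]
          apply hmono
          obtain hA | hA := abs_choice a <;> rw [hA] <;>
            simp only [max_def] <;> split_ifs <;> omega
        · rw [if_neg (by tauto), if_neg hp, if_pos hq]
          apply hmono
          simp only [max_def]; split_ifs <;> omega
  · simpa using nsBnd_nonneg hϖ0.le m

lemma ns_single_mem_nsS {k : Type*} [NormedField k] [IsUltrametricDist k]
    {ϖ : k} (hϖ0 : 0 < ‖ϖ‖) (hϖ1 : ‖ϖ‖ ≤ 1) (p q : ℤ) (hp : 0 ≤ p) (hq : 0 ≤ q) :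
    (AddMonoidAlgebra.single (p, q, (0:ℤ), (0:ℕ)) (1 : k)) ∈ nsS k hϖ0 hϖ1 := by
  intro m hm
  classical
  rw [AddMonoidAlgebra.coeff_single, Finsupp.single_apply]
  split_ifs with hj
  · subst hj
    unfold nsBnd
    dsimp only
    rw [if_pos rfl, if_pos ⟨hp, hq⟩]
    simp
  · simpa using nsBnd_nonneg hϖ0.le m
/-- With `R₀ ⊆ k[P,P⁻¹,Q,Q⁻¹,T,T⁻¹,Z]` as in the non-sheafy uniform
example and `A₀ = R₀[P,Q]`: for all `n ≥ 0`, `ϖ⁻ⁿZ ∈ A₀[T]` and `ϖ⁻ⁿZ ∈ A₀[T⁻¹]`,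
but `ϖ⁻¹Z ∉ A₀`. -/
theorem non_sheafy_uniform_Z_locally_zero
    (k : Type*) [NontriviallyNormedField k] [IsUltrametricDist k] [CompleteSpace k]
    (ϖ : k) (hϖ0 : 0 < ‖ϖ‖) (hϖ1 : ‖ϖ‖ < 1)
    (R₀ : Submodule (valuationSubring k) (AddMonoidAlgebra k (ℤ × ℤ × ℤ × ℕ)))
    (hR₀ : R₀ = Submodule.span (valuationSubring k)
      {x : AddMonoidAlgebra k (ℤ × ℤ × ℤ × ℕ) | ∃ (p q a : ℤ) (e : ℕ),
        (e = 0 → 0 ≤ p ∧ 0 ≤ q) ∧ (e = 1 → 0 ≤ p ∨ 0 ≤ q) ∧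
        x = ϖ ^ (max (max (p + q + a) (p + q - a)) (max (p + a) (q - a))) •
          AddMonoidAlgebra.single (p, q, a, e) (1 : k)})
    (Z : AddMonoidAlgebra k (ℤ × ℤ × ℤ × ℕ))
    (hZ : Z = AddMonoidAlgebra.single ((0 : ℤ), (0 : ℤ), (0 : ℤ), (1 : ℕ)) (1 : k))
    (P Q T : AddMonoidAlgebra k (ℤ × ℤ × ℤ × ℕ))
    (hP : P = AddMonoidAlgebra.single ((1 : ℤ), (0 : ℤ), (0 : ℤ), (0 : ℕ)) (1 : k))
    (hQ : Q = AddMonoidAlgebra.single ((0 : ℤ), (1 : ℤ), (0 : ℤ), (0 : ℕ)) (1 : k))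
    (hT : T = AddMonoidAlgebra.single ((0 : ℤ), (0 : ℤ), (1 : ℤ), (0 : ℕ)) (1 : k))
    (A₀ : Subring (AddMonoidAlgebra k (ℤ × ℤ × ℤ × ℕ)))
    (hA₀ : A₀ = Subring.closure
      ((R₀ : Set (AddMonoidAlgebra k (ℤ × ℤ × ℤ × ℕ))) ∪ {P, Q})) :
    (∀ n : ℕ, (ϖ⁻¹) ^ n • Z ∈ Subring.closure
      ((A₀ : Set (AddMonoidAlgebra k (ℤ × ℤ × ℤ × ℕ))) ∪ {T})) ∧
    (∀ n : ℕ, (ϖ⁻¹) ^ n • Z ∈ Subring.closure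
      ((A₀ : Set (AddMonoidAlgebra k (ℤ × ℤ × ℤ × ℕ))) ∪
        {AddMonoidAlgebra.single ((0 : ℤ), (0 : ℤ), (-1 : ℤ), (0 : ℕ)) (1 : k)})) ∧
    ϖ⁻¹ • Z ∉ A₀ := by
  have hPA : P ∈ A₀ := by
    rw [hA₀]; exact Subring.subset_closure (Set.mem_union_right _ (by simp))
  have hQA : Q ∈ A₀ := by
    rw [hA₀]; exact Subring.subset_closure (Set.mem_union_right _ (by simp))
  refine ⟨?_, ?_, ?_⟩
  · -- part 1 : A₀[T]
    intro n
    have hmax : max (max ((0:ℤ) + -(2*(n:ℤ)) + -(n:ℤ)) ((0:ℤ) + -(2*(n:ℤ)) - -(n:ℤ)))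
        (max ((0:ℤ) + -(n:ℤ)) (-(2*(n:ℤ)) - -(n:ℤ))) = -(n:ℤ) := by
      simp only [max_def]; split_ifs <;> omega
    have hgR : (ϖ ^ (-(n:ℤ)) •
        AddMonoidAlgebra.single ((0:ℤ), -(2*(n:ℤ)), -(n:ℤ), (1:ℕ)) (1:k)) ∈ R₀ := by
      rw [hR₀]
      apply Submodule.subset_span
      exact ⟨0, -(2*n), -n, 1, by simp, fun _ => Or.inl le_rfl, by rw [hmax]⟩
    have hgC : (ϖ ^ (-(n:ℤ)) •
        AddMonoidAlgebra.single ((0:ℤ), -(2*(n:ℤ)), -(n:ℤ), (1:ℕ)) (1:k)) ∈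
        Subring.closure ((A₀ : Set (AddMonoidAlgebra k (ℤ × ℤ × ℤ × ℕ))) ∪ {T}) := by
      apply Subring.subset_closure
      apply Set.mem_union_left
      rw [hA₀]
      exact Subring.subset_closure (Set.mem_union_left _ hgR)
    have hQC : Q ∈ Subring.closure ((A₀ : Set (AddMonoidAlgebra k (ℤ × ℤ × ℤ × ℕ))) ∪ {T}) :=
      Subring.subset_closure (Set.mem_union_left _ hQA)
    have hTC : T ∈ Subring.closure ((A₀ : Set (AddMonoidAlgebra k (ℤ × ℤ × ℤ × ℕ))) ∪ {T}) :=
      Subring.subset_closure (Set.mem_union_right _ rfl)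
    have hkey : (ϖ⁻¹) ^ n • Z =
        (ϖ ^ (-(n:ℤ)) • AddMonoidAlgebra.single ((0:ℤ), -(2*(n:ℤ)), -(n:ℤ), (1:ℕ)) (1:k)) *
          Q ^ (2 * n) * T ^ n := by
      rw [hZ, hQ, hT, AddMonoidAlgebra.single_pow, AddMonoidAlgebra.single_pow,
        smul_mul_assoc, smul_mul_assoc, AddMonoidAlgebra.single_mul_single,
        AddMonoidAlgebra.single_mul_single]
      rw [one_pow, one_pow, one_mul, one_mul]
      congr 1
      · rw [zpow_neg, zpow_natCast, inv_pow]
      · congr 1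
        simp only [Prod.smul_mk, Prod.mk_add_mk, smul_zero, smul_eq_mul, mul_one,
          nsmul_eq_mul, Nat.cast_id]
        refine Prod.ext ?_ (Prod.ext ?_ (Prod.ext ?_ ?_)) <;> dsimp <;> omega
    rw [hkey]
    exact mul_mem (mul_mem hgC (pow_mem hQC _)) (pow_mem hTC _)
  · -- part 2 : A₀[T⁻¹]
    intro n
    have hmax : max (max (-(2*(n:ℤ)) + 0 + (n:ℤ)) (-(2*(n:ℤ)) + 0 - (n:ℤ)))
        (max (-(2*(n:ℤ)) + (n:ℤ)) ((0:ℤ) - (n:ℤ))) = -(n:ℤ) := by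
      simp only [max_def]; split_ifs <;> omega
    have hgR : (ϖ ^ (-(n:ℤ)) •
        AddMonoidAlgebra.single (-(2*(n:ℤ)), (0:ℤ), (n:ℤ), (1:ℕ)) (1:k)) ∈ R₀ := by
      rw [hR₀]
      apply Submodule.subset_span
      exact ⟨-(2*n), 0, n, 1, by simp, fun _ => Or.inr le_rfl, by rw [hmax]⟩
    set Ti : AddMonoidAlgebra k (ℤ × ℤ × ℤ × ℕ) :=
      AddMonoidAlgebra.single ((0 : ℤ), (0 : ℤ), (-1 : ℤ), (0 : ℕ)) (1 : k) with hTi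
    have hgC : (ϖ ^ (-(n:ℤ)) •
        AddMonoidAlgebra.single (-(2*(n:ℤ)), (0:ℤ), (n:ℤ), (1:ℕ)) (1:k)) ∈
        Subring.closure ((A₀ : Set (AddMonoidAlgebra k (ℤ × ℤ × ℤ × ℕ))) ∪ {Ti}) := by
      apply Subring.subset_closure
      apply Set.mem_union_left
      rw [hA₀]
      exact Subring.subset_closure (Set.mem_union_left _ hgR)
    have hPC : P ∈ Subring.closure ((A₀ : Set (AddMonoidAlgebra k (ℤ × ℤ × ℤ × ℕ))) ∪ {Ti}) :=
      Subring.subset_closure (Set.mem_union_left _ hPA)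
    have hTiC : Ti ∈ Subring.closure ((A₀ : Set (AddMonoidAlgebra k (ℤ × ℤ × ℤ × ℕ))) ∪ {Ti}) :=
      Subring.subset_closure (Set.mem_union_right _ rfl)
    have hkey : (ϖ⁻¹) ^ n • Z =
        (ϖ ^ (-(n:ℤ)) • AddMonoidAlgebra.single (-(2*(n:ℤ)), (0:ℤ), (n:ℤ), (1:ℕ)) (1:k)) *
          P ^ (2 * n) * Ti ^ n := by
      rw [hZ, hP, hTi, AddMonoidAlgebra.single_pow, AddMonoidAlgebra.single_pow,
        smul_mul_assoc, smul_mul_assoc, AddMonoidAlgebra.single_mul_single,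
        AddMonoidAlgebra.single_mul_single]
      rw [one_pow, one_pow, one_mul, one_mul]
      congr 1
      · rw [zpow_neg, zpow_natCast, inv_pow]
      · congr 1
        simp only [Prod.smul_mk, Prod.mk_add_mk, smul_zero, smul_eq_mul, mul_one,
          nsmul_eq_mul, Nat.cast_id]
        refine Prod.ext ?_ (Prod.ext ?_ (Prod.ext ?_ ?_)) <;> dsimp <;> omega
    rw [hkey]
    exact mul_mem (mul_mem hgC (pow_mem hPC _)) (pow_mem hTiC _)
  · -- part 3 : ϖ⁻¹ • Z ∉ A₀
    intro hmem
    have hAS : A₀ ≤ nsS k hϖ0 hϖ1.le := by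
      rw [hA₀, Subring.closure_le]
      rintro x (hx | hx)
      · -- x ∈ R₀
        rw [hR₀] at hx
        simp only [SetLike.mem_coe] at hx
        refine Submodule.span_induction
          (p := fun y _ => y ∈ nsS k hϖ0 hϖ1.le) ?_ ?_ ?_ ?_ hx
        · rintro y ⟨p, q, a, e, h0, h1, rfl⟩
          exact ns_mem_nsS_of_gen hϖ0 hϖ1.le p q a e h0 h1
        · exact zero_mem _
        · intro y z _ _ hy hz; exact add_mem hy hz
        · intro c y _ hy
          intro m hm
          have hcy : (c • y).coeff m = (c : k) * y.coeff m := by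
            rw [Subring.smul_def, AddMonoidAlgebra.coeff_smul, Finsupp.smul_apply, smul_eq_mul]
          rw [hcy, norm_mul]
          calc ‖(c : k)‖ * ‖y.coeff m‖ ≤ 1 * nsBnd ‖ϖ‖ m :=
              mul_le_mul c.2 (hy m hm) (norm_nonneg _) zero_le_one
            _ = nsBnd ‖ϖ‖ m := one_mul _
      · -- x ∈ {P, Q}
        simp only [Set.mem_insert_iff, Set.mem_singleton_iff] at hx
        rcases hx with rfl | rfl
        · rw [hP]; exact ns_single_mem_nsS hϖ0 hϖ1.le 1 0 one_pos.le le_rfl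
        · rw [hQ]; exact ns_single_mem_nsS hϖ0 hϖ1.le 0 1 le_rfl one_pos.le
    have hb := hAS hmem ((0:ℤ), (0:ℤ), (0:ℤ), (1:ℕ)) (by norm_num)
    rw [hZ, AddMonoidAlgebra.coeff_smul, Finsupp.smul_apply, AddMonoidAlgebra.coeff_single, Finsupp.single_apply, if_pos rfl, smul_eq_mul, mul_one,
      norm_inv] at hb
    have hbnd : nsBnd ‖ϖ‖ ((0:ℤ), (0:ℤ), (0:ℤ), (1:ℕ)) = 1 := by
      unfold nsBnd; norm_num
    rw [hbnd] at hb
    have h2 : ‖ϖ‖ * ‖ϖ‖⁻¹ = 1 := mul_inv_cancel₀ hϖ0.ne'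
    nlinarith
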